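/- Let A be a primitive K-algebra (i.e., A admits a faithful simple right A-module). If the K-vector space dimension of A is strictly less than the cardinality of K, then every element of the endomorphism ring End_A(V) of a faithful simple right A-module V that commutes with the A-action and is central is algebraic over K; in particular, the center of End_A(V) is an algebraic field extension of K. -/

import Mathlib

universe u v w

/-- A central element of a division `F`-algebra `E` with `dim_F E < #F` is algebraic over `F`. -/
theorem central_isAlgebraic_of_rank_lt {F : Type u} {E : Type w} [Field F] [DivisionRing E]
    [Algebra F E] (x : E) (hx : x ∈ Subring.center E)
    (hlt : Cardinal.lift.{u} (Module.rank F E) < Cardinal.lift.{w} (Cardinal.mk F)) :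
    IsAlgebraic F x := by
  by_contra H
  have H' : Transcendental F x := H
  letI : Algebra F (Subring.center E) :=
    ((algebraMap F E).codRestrict (Subring.center E) fun r =>
      Subring.mem_center_iff.2 fun a => (Algebra.commutes r a).symm).toAlgebra
  let f : Subring.center E →ₐ[F] E :=
    { (Subring.center E).subtype with commutes' := fun r => rfl }
  set ψ : Subring.center E := ⟨x, hx⟩ with hψdef
  have hψ : Transcendental F ψ := by
    rw [transcendental_iff]
    intro p hp
    refine transcendental_iff.1 H' p ?_
    rw [show x = f ψ from rfl, Polynomial.aeval_algHom_apply f ψ p, hp, map_zero]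
  have hli : LinearIndependent F
      (fun a : F => f ((ψ - algebraMap F (Subring.center E) a)⁻¹)) :=
    (hψ.linearIndependent_sub_inv).map' f.toLinearMap
      (LinearMap.ker_eq_bot.2 (fun a b h => Subtype.ext h))
  have hcard := hli.cardinal_lift_le_rank
  exact absurd hcard (not_le.2 hlt)

/-- Let `A` be a primitive `K`-algebra (it admits a faithful simple right module `V`).
If `dim_K A < #K`, then every element of `End_A(V)` (for a faithful simple right
`A`-module `V`) lying in the center is algebraic over `K`; in particular the center of
`End_A(V)` is an algebraic field extension of `K`. Right `A`-modules are modules over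
the opposite ring `Aᵐᵒᵖ`. -/
theorem center_of_endomorphism_ring_algebraic (K : Type u) (A : Type v) [Field K] [Ring A]
    [Algebra K A] (V : Type w) [AddCommGroup V] [Module K V] [Module Aᵐᵒᵖ V]
    [IsScalarTower K Aᵐᵒᵖ V] [SMulCommClass Aᵐᵒᵖ K V]
    (hsimple : IsSimpleModule Aᵐᵒᵖ V) (hfaithful : FaithfulSMul Aᵐᵒᵖ V)
    (hdim : Cardinal.lift.{u} (Module.rank K A) < Cardinal.lift.{v} (Cardinal.mk K)) :
    ∀ φ : Module.End Aᵐᵒᵖ V, φ ∈ Subalgebra.center K (Module.End Aᵐᵒᵖ V) →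
      IsAlgebraic K φ := by
  classical
  haveI := hsimple
  intro φ hφ
  -- `V` is nontrivial
  haveI : Nontrivial V := IsSimpleModule.nontrivial Aᵐᵒᵖ V
  obtain ⟨v, hv⟩ := exists_ne (0 : V)
  -- evaluation at `v` is an injective `K`-linear map `End → V`
  let f : Module.End Aᵐᵒᵖ V →ₗ[K] V :=
    { toFun := fun d => d v
      map_add' := fun d e => rfl
      map_smul' := fun k d => rfl }
  have hf : Function.Injective f := by
    rw [← LinearMap.ker_eq_bot]
    refine (Submodule.eq_bot_iff _).2 fun d hd => ?_
    rcases d.injective_or_eq_zero with hinj | h0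
    · by_contra hne
      exact hv (hinj (by simpa [f] using hd))
    · exact h0
  -- the orbit map `A → V` is a surjective `K`-linear map
  let g : A →ₗ[K] V :=
    { toFun := fun a => MulOpposite.op a • v
      map_add' := fun a b => by simp [add_smul]
      map_smul' := fun k a => by
        simp only [MulOpposite.op_smul, RingHom.id_apply]
        exact smul_assoc k (MulOpposite.op a) v }
  have hg : Function.Surjective g := by
    intro x
    have hspan : Submodule.span Aᵐᵒᵖ ({v} : Set V) = ⊤ := by
      rcases eq_bot_or_eq_top (Submodule.span Aᵐᵒᵖ ({v} : Set V)) with h | h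
      · exact absurd (h ▸ Submodule.mem_span_singleton_self v) (by simpa using hv)
      · exact h
    have hx : x ∈ Submodule.span Aᵐᵒᵖ ({v} : Set V) := hspan ▸ Submodule.mem_top
    obtain ⟨c, hc⟩ := Submodule.mem_span_singleton.1 hx
    exact ⟨c.unop, by simpa [g] using hc⟩
  have h1 : Module.rank K (Module.End Aᵐᵒᵖ V) ≤ Module.rank K V :=
    f.rank_le_of_injective hf
  have h2 : Cardinal.lift.{v} (Module.rank K V) ≤ Cardinal.lift.{w} (Module.rank K A) :=
    g.lift_rank_le_of_surjective hg
  -- combine the cardinality bounds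
  have hlt : Cardinal.lift.{u} (Module.rank K (Module.End Aᵐᵒᵖ V)) <
      Cardinal.lift.{w} (Cardinal.mk K) := by
    rw [← Cardinal.lift_lt.{_, v}]
    calc Cardinal.lift.{v} (Cardinal.lift.{u} (Module.rank K (Module.End Aᵐᵒᵖ V)))
        ≤ Cardinal.lift.{v} (Cardinal.lift.{u} (Module.rank K V)) := by
          exact Cardinal.lift_le.2 (Cardinal.lift_le.2 h1)
      _ = Cardinal.lift.{u} (Cardinal.lift.{v} (Module.rank K V)) := by
          rw [Cardinal.lift_lift, Cardinal.lift_lift]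
      _ ≤ Cardinal.lift.{u} (Cardinal.lift.{w} (Module.rank K A)) := Cardinal.lift_le.2 h2
      _ = Cardinal.lift.{w} (Cardinal.lift.{u} (Module.rank K A)) := by
          rw [Cardinal.lift_lift, Cardinal.lift_lift]
      _ < Cardinal.lift.{w} (Cardinal.lift.{v} (Cardinal.mk K)) := Cardinal.lift_lt.2 hdim
      _ = Cardinal.lift.{v} (Cardinal.lift.{w} (Cardinal.mk K)) := by
          rw [Cardinal.lift_lift, Cardinal.lift_lift]
  exact central_isAlgebraic_of_rank_lt φ
    (Subring.mem_center_iff.2 fun a => (Subalgebra.mem_center_iff.1 hφ a)) hlt
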